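/- arXiv:math/0507281 — 2 statements merged into one kernel-verified Lean document; each statement's English description precedes it below -/
import Mathlib

section
/- Let n ≥ 0 be an integer and let x_1, …, x_{2n+1} be real numbers. Then sin(x_1)⋯sin(x_{2n+1}) = ((−1)^n/2^{2n})·Σ_{I ⊆ {1,…,2n+1}, |I| odd} sin(Σ_{i∈I} x_i − Σ_{i∉I} x_i). -/
open Real Finset

lemma sin_mul_two_I (z : ℂ) :
    Complex.sin z * (2 * Complex.I) =
      Complex.exp (z * Complex.I) + -Complex.exp (-z * Complex.I) := by
  rw [Complex.exp_mul_I, Complex.exp_mul_I, Complex.sin_neg, Complex.cos_neg]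
  ring_nf

lemma prod_sin_complex (m : ℕ) (y : Fin (2 * m + 1) → ℂ) :
    (∏ i, Complex.sin (y i)) * (2 * Complex.I) ^ (2 * m + 1) =
      (∑ I ∈ Finset.univ.filter (fun I : Finset (Fin (2 * m + 1)) => Odd I.card),
        Complex.sin ((∑ i ∈ I, y i) - ∑ i ∈ Iᶜ, y i)) * (2 * Complex.I) := by
  set g : Finset (Fin (2 * m + 1)) → ℂ := fun t =>
    (-1 : ℂ) ^ tᶜ.card * Complex.exp (((∑ i ∈ t, y i) - ∑ i ∈ tᶜ, y i) * Complex.I) with hg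
  have hcard : ∀ t : Finset (Fin (2 * m + 1)), tᶜ.card = 2 * m + 1 - t.card := by
    intro t
    rw [Finset.card_compl, Fintype.card_fin]
  have hodd : Odd (2 * m + 1) := ⟨m, by ring⟩
  have h1 : (∏ i, Complex.sin (y i)) * (2 * Complex.I) ^ (2 * m + 1)
      = ∑ t : Finset (Fin (2 * m + 1)), g t := by
    have : (∏ i, Complex.sin (y i)) * (2 * Complex.I) ^ (2 * m + 1)
        = ∏ i : Fin (2 * m + 1), (Complex.sin (y i) * (2 * Complex.I)) := by
      rw [Finset.prod_mul_distrib, Finset.prod_const, Finset.card_univ, Fintype.card_fin]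
    rw [this]
    simp only [sin_mul_two_I]
    rw [Finset.prod_add, Finset.powerset_univ]
    refine Finset.sum_congr rfl fun t _ => ?_
    have hc : Finset.univ \ t = tᶜ := (Finset.compl_eq_univ_sdiff t).symm
    rw [hc, hg]
    simp only
    rw [← Complex.exp_sum, ← Finset.sum_mul]
    have : ∏ i ∈ tᶜ, -Complex.exp (-y i * Complex.I)
        = (-1 : ℂ) ^ tᶜ.card * Complex.exp ((-∑ i ∈ tᶜ, y i) * Complex.I) := by
      calc ∏ i ∈ tᶜ, -Complex.exp (-y i * Complex.I)
          = ∏ i ∈ tᶜ, ((-1 : ℂ) * Complex.exp (-y i * Complex.I)) := by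
            simp [neg_one_mul]
        _ = (-1 : ℂ) ^ tᶜ.card * Complex.exp (∑ i ∈ tᶜ, -y i * Complex.I) := by
            rw [Finset.prod_mul_distrib, Finset.prod_const, Complex.exp_sum]
        _ = (-1 : ℂ) ^ tᶜ.card * Complex.exp ((-∑ i ∈ tᶜ, y i) * Complex.I) := by
            congr 2
            rw [← Finset.sum_mul, ← Finset.sum_neg_distrib]
    rw [this, mul_left_comm, ← Complex.exp_add]
    congr 2
    ring
  rw [h1]
  rw [← Finset.sum_filter_add_sum_filter_not Finset.univ (fun t => Odd t.card) g]
  have h2 : ∑ t ∈ Finset.univ.filter (fun t : Finset (Fin (2 * m + 1)) => ¬ Odd t.card), g t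
      = ∑ I ∈ Finset.univ.filter (fun I : Finset (Fin (2 * m + 1)) => Odd I.card), g Iᶜ := by
    refine Finset.sum_nbij' (fun t => tᶜ) (fun I => Iᶜ) ?_ ?_ ?_ ?_ ?_
    · intro t ht
      simp only [Finset.mem_filter, Finset.mem_univ, true_and] at ht ⊢
      rw [hcard, Nat.odd_sub (by simpa using Finset.card_le_univ t)]
      exact iff_of_true hodd (Nat.not_odd_iff_even.mp ht)
    · intro I hI
      simp only [Finset.mem_filter, Finset.mem_univ, true_and] at hI ⊢
      rw [hcard, Nat.odd_sub (by simpa using Finset.card_le_univ I)]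
      intro h
      exact absurd hI (by simpa using Nat.not_odd_iff_even.mpr (h.mp hodd))
    · intro t _; exact compl_compl t
    · intro I _; exact compl_compl I
    · intro t _; rw [compl_compl]
  rw [h2, ← Finset.sum_add_distrib, Finset.sum_mul]
  refine Finset.sum_congr rfl fun I hI => ?_
  simp only [Finset.mem_filter, Finset.mem_univ, true_and] at hI
  have hle : I.card ≤ 2 * m + 1 := by simpa using Finset.card_le_univ I
  have he : Even Iᶜ.card := by
    rw [hcard]; exact Nat.Odd.sub_odd hodd hI
  rw [hg]
  simp only [compl_compl]
  rw [he.neg_one_pow, hI.neg_one_pow, sin_mul_two_I, neg_sub]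
  ring

theorem prod_sin_odd_expansion (n : ℕ) (x : Fin (2 * n + 1) → ℝ) :
    ∏ i, Real.sin (x i) =
      ((-1 : ℝ) ^ n / 2 ^ (2 * n)) *
        ∑ I ∈ Finset.univ.filter (fun I : Finset (Fin (2 * n + 1)) => Odd I.card),
          Real.sin (∑ i ∈ I, x i - ∑ i ∈ Iᶜ, x i) := by
  apply Complex.ofReal_injective
  push_cast
  have key := prod_sin_complex n (fun i => (x i : ℂ))
  have h2I : (2 * Complex.I) ≠ 0 := by simp [Complex.I_ne_zero]
  have hpow : (2 * Complex.I) ^ (2 * n + 1) = (-4 : ℂ) ^ n * (2 * Complex.I) := by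
    rw [pow_succ, pow_mul]
    congr 2
    rw [mul_pow, Complex.I_sq]
    norm_num
  rw [hpow, ← mul_assoc] at key
  have key2 := mul_right_cancel₀ h2I key
  have hone : ((-1 : ℂ) ^ n / 2 ^ (2 * n)) * (-4 : ℂ) ^ n = 1 := by
    have h14 : (-1 : ℂ) ^ n * (-4 : ℂ) ^ n = 4 ^ n := by rw [← mul_pow]; norm_num
    rw [div_mul_eq_mul_div, h14, pow_mul]
    norm_num
  calc ∏ i, Complex.sin ((x i : ℂ))
      = (((-1 : ℂ) ^ n / 2 ^ (2 * n)) * (-4 : ℂ) ^ n) * ∏ i, Complex.sin ((x i : ℂ)) := by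
        rw [hone, one_mul]
    _ = ((-1 : ℂ) ^ n / 2 ^ (2 * n)) * ((∏ i, Complex.sin ((x i : ℂ))) * (-4 : ℂ) ^ n) := by
        ring
    _ = _ := by rw [key2]
end

section
/- Let n ≥ 2 be an integer. There exists ε > 0 such that for all real numbers r_1, …, r_{2n} with 0 < r_i < ε for all i, one has (2^{2n−1}/π)·Σ_{k=1}^∞ (sin(k r_1)⋯sin(k r_{2n}))/k^{2n−2} = −(1/(4·(2n−3)!))·Σ_{I ⊆ {1,…,2n}} (−1)^{|I|} |r_I − r_{Ī}|^{2n−3}. -/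
open Real Finset


lemma prod_sin_complex_s7 (m : ℕ) (hm : Even m) (z : Fin m → ℂ) :
    ∏ i, Complex.sin (z i) = (Complex.I / 2) ^ m *
      ∑ T : Finset (Fin m), (-1 : ℂ) ^ T.card *
        Complex.cos (∑ i ∈ T, z i - ∑ i ∈ Tᶜ, z i) := by
  have step1 : ∏ i, Complex.sin (z i) = (Complex.I / 2) ^ m *
      ∏ i, (Complex.exp (-(z i) * Complex.I) + -Complex.exp (z i * Complex.I)) := by
    rw [Finset.prod_congr rfl (fun i _ => show Complex.sin (z i) =
      (Complex.exp (-(z i) * Complex.I) + -Complex.exp (z i * Complex.I)) * (Complex.I / 2) by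
        rw [Complex.sin]; ring), Finset.prod_mul_distrib, Finset.prod_const]
    rw [Finset.card_univ, Fintype.card_fin, mul_comm]
  have hsign : ∀ T : Finset (Fin m), (-1 : ℂ) ^ (Tᶜ.card) = (-1) ^ T.card := by
    intro T
    have h1 : Tᶜ.card + T.card = m := by
      have h0 := Finset.card_le_univ T
      rw [Fintype.card_fin] at h0
      rw [Finset.card_compl, Fintype.card_fin]
      omega
    have h2 : (-1 : ℂ) ^ (Tᶜ.card + T.card) = 1 := by
      rw [h1, (hm.neg_one_pow : (-1:ℂ)^m = 1)]
    have h3 : (-1 : ℂ) ^ T.card * (-1) ^ T.card = 1 := by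
      rw [← pow_add, ← two_mul, pow_mul, neg_one_sq, one_pow]
    rw [pow_add] at h2
    calc (-1 : ℂ) ^ Tᶜ.card = (-1 : ℂ) ^ Tᶜ.card * ((-1) ^ T.card * (-1) ^ T.card) := by
          rw [h3, mul_one]
      _ = (-1) ^ T.card := by rw [← mul_assoc, h2, one_mul]
  have prodneg : ∀ T : Finset (Fin m), ∏ i ∈ Tᶜ, -Complex.exp (z i * Complex.I) =
      (-1) ^ Tᶜ.card * ∏ i ∈ Tᶜ, Complex.exp (z i * Complex.I) := by
    intro T
    rw [Finset.prod_congr rfl (fun i _ => show -Complex.exp (z i * Complex.I) =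
      (-1) * Complex.exp (z i * Complex.I) by ring), Finset.prod_mul_distrib, Finset.prod_const]
  have step2 : ∏ i, (Complex.exp (-(z i) * Complex.I) + -Complex.exp (z i * Complex.I)) =
      ∑ T : Finset (Fin m), (-1 : ℂ) ^ T.card *
        Complex.exp (-(∑ i ∈ T, z i - ∑ i ∈ Tᶜ, z i) * Complex.I) := by
    rw [Finset.prod_add, Finset.powerset_univ]
    refine Finset.sum_congr rfl fun T _ => ?_
    rw [show Finset.univ \ T = Tᶜ from (Finset.compl_eq_univ_sdiff T).symm]
    rw [prodneg, hsign]
    have e1 : (∏ i ∈ T, Complex.exp (-z i * Complex.I)) *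
        ∏ i ∈ Tᶜ, Complex.exp (z i * Complex.I) =
        Complex.exp ((∑ i ∈ T, -z i * Complex.I) + ∑ i ∈ Tᶜ, z i * Complex.I) := by
      rw [Complex.exp_add, Complex.exp_sum, Complex.exp_sum]
    have e2 : (∑ i ∈ T, -z i * Complex.I) + ∑ i ∈ Tᶜ, z i * Complex.I =
        -(∑ i ∈ T, z i - ∑ i ∈ Tᶜ, z i) * Complex.I := by
      rw [← Finset.sum_mul, ← Finset.sum_mul, Finset.sum_neg_distrib]
      ring
    rw [mul_left_comm, e1, e2]
  -- reindex by complement to symmetrize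
  have hswap : ∑ T : Finset (Fin m), (-1 : ℂ) ^ T.card *
        Complex.exp (-(∑ i ∈ T, z i - ∑ i ∈ Tᶜ, z i) * Complex.I) =
      ∑ T : Finset (Fin m), (-1 : ℂ) ^ T.card *
        Complex.exp ((∑ i ∈ T, z i - ∑ i ∈ Tᶜ, z i) * Complex.I) := by
    apply Fintype.sum_bijective (fun T : Finset (Fin m) => Tᶜ)
      (Function.Involutive.bijective fun T => compl_compl T)
    intro T
    rw [hsign, compl_compl]
    congr 2
    ring
  have hcos : ∑ T : Finset (Fin m), (-1 : ℂ) ^ T.card *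
        Complex.exp (-(∑ i ∈ T, z i - ∑ i ∈ Tᶜ, z i) * Complex.I) =
      ∑ T : Finset (Fin m), (-1 : ℂ) ^ T.card *
        Complex.cos (∑ i ∈ T, z i - ∑ i ∈ Tᶜ, z i) := by
    have : ∀ T : Finset (Fin m), (-1 : ℂ) ^ T.card *
        Complex.cos (∑ i ∈ T, z i - ∑ i ∈ Tᶜ, z i) =
        ((-1 : ℂ) ^ T.card * Complex.exp (-(∑ i ∈ T, z i - ∑ i ∈ Tᶜ, z i) * Complex.I)
          + (-1 : ℂ) ^ T.card * Complex.exp ((∑ i ∈ T, z i - ∑ i ∈ Tᶜ, z i) * Complex.I)) / 2 := by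
      intro T
      rw [Complex.cos]
      ring
    rw [Finset.sum_congr rfl fun T _ => this T, ← Finset.sum_div, Finset.sum_add_distrib,
      ← hswap]
    ring
  rw [step1, step2, hcos]

lemma prod_sin_real (n : ℕ) (x : Fin (2*n) → ℝ) :
    ∏ i, Real.sin (x i) = (-1:ℝ)^n / 2^(2*n) *
      ∑ T : Finset (Fin (2*n)), (-1:ℝ)^T.card *
        Real.cos (∑ i ∈ T, x i - ∑ i ∈ Tᶜ, x i) := by
  have key := prod_sin_complex_s7 (2*n) (even_two_mul n) (fun i => (x i : ℂ))
  have hI : (Complex.I / 2)^(2*n) = ((-1:ℂ)^n / 2^(2*n)) := by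
    rw [div_pow, pow_mul, Complex.I_sq]
  apply Complex.ofReal_injective
  push_cast [Complex.ofReal_sin, Complex.ofReal_cos]
  rw [key, hI]

lemma alt_vanish {m : ℕ} (e : ℕ) (he : e < m) (r : Fin m → ℝ) :
    ∑ T : Finset (Fin m), (-1:ℝ)^T.card * (∑ i ∈ T, r i - ∑ i ∈ Tᶜ, r i)^e = 0 := by
  have hdiff : ∀ T : Finset (Fin m), ∑ i ∈ T, r i - ∑ i ∈ Tᶜ, r i
      = ∑ i, (if i ∈ T then r i else -r i) := by
    intro T
    rw [← Finset.sum_add_sum_compl T (fun i => if i ∈ T then r i else -r i)]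
    have h1 : ∑ i ∈ T, (if i ∈ T then r i else -r i) = ∑ i ∈ T, r i :=
      Finset.sum_congr rfl fun i hi => if_pos hi
    have h2 : ∑ i ∈ Tᶜ, (if i ∈ T then r i else -r i) = ∑ i ∈ Tᶜ, -r i :=
      Finset.sum_congr rfl fun i hi => if_neg (Finset.mem_compl.mp hi)
    rw [h1, h2, Finset.sum_neg_distrib]
    ring
  have hpow : ∀ T : Finset (Fin m), (∑ i, (if i ∈ T then r i else -r i))^e
      = ∑ g : Fin e → Fin m, ∏ j, (if g j ∈ T then r (g j) else -r (g j)) := by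
    intro T
    have h0 : (∑ i, (if i ∈ T then r i else -r i))^e
        = ∏ _j : Fin e, (∑ i, (if i ∈ T then r i else -r i)) := by
      rw [Finset.prod_const, Finset.card_univ, Fintype.card_fin]
    rw [h0, Finset.prod_univ_sum (fun _ => (univ : Finset (Fin m))), Fintype.piFinset_univ]
  calc ∑ T : Finset (Fin m), (-1:ℝ)^T.card * (∑ i ∈ T, r i - ∑ i ∈ Tᶜ, r i)^e
      = ∑ g : Fin e → Fin m, ∑ T : Finset (Fin m),
          (-1:ℝ)^T.card * ∏ j, (if g j ∈ T then r (g j) else -r (g j)) := by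
        rw [Finset.sum_comm]
        exact Finset.sum_congr rfl fun T _ => by rw [hdiff, hpow, Finset.mul_sum]
    _ = 0 := by
        apply Finset.sum_eq_zero
        intro g _
        obtain ⟨i0, hi0⟩ : ∃ i0, i0 ∉ Finset.image g univ := by
          by_contra h
          push_neg at h
          have hcard := Finset.card_image_le (f := g) (s := (univ : Finset (Fin e)))
          rw [Finset.eq_univ_iff_forall.mpr h] at hcard
          simp only [Finset.card_univ, Fintype.card_fin] at hcard
          omega
        have hgj : ∀ j, g j ≠ i0 := fun j hj =>
          hi0 (hj ▸ Finset.mem_image_of_mem g (Finset.mem_univ j))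
        have h1 : (univ : Finset (Finset (Fin m))) = ((univ : Finset (Fin m))).powerset :=
          Finset.powerset_univ.symm
        rw [h1, (Finset.insert_erase (Finset.mem_univ i0)).symm,
          Finset.sum_powerset_insert (Finset.notMem_erase i0 _), ← Finset.sum_add_distrib]
        apply Finset.sum_eq_zero
        intro t ht
        have hi0t : i0 ∉ t := fun h => (Finset.notMem_erase i0 _) (Finset.mem_powerset.mp ht h)
        have hprod : ∏ j, (if g j ∈ insert i0 t then r (g j) else -r (g j))
            = ∏ j, (if g j ∈ t then r (g j) else -r (g j)) :=
          Finset.prod_congr rfl fun j _ => if_congr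
            (by simp [Finset.mem_insert, hgj j]) rfl rfl
        rw [Finset.card_insert_of_notMem hi0t, pow_succ, hprod]
        ring

lemma bern_eval (p : ℕ) (x : ℝ) :
    (Polynomial.map (algebraMap ℚ ℝ) (Polynomial.bernoulli (2*p))).eval x
      = ∑ i ∈ Finset.range (2*p+1),
          ((bernoulli i : ℝ) * ((2*p).choose i : ℝ)) * x^(2*p - i) := by
  rw [Polynomial.bernoulli, Polynomial.map_sum, Polynomial.eval_finset_sum]
  refine Finset.sum_congr rfl fun i _ => ?_
  rw [Polynomial.map_monomial, Polynomial.eval_monomial]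
  rw [eq_ratCast]
  push_cast
  ring

lemma key_bern (m p : ℕ) (hp : p ≠ 0) (hpm : 2*p < m) (r : Fin m → ℝ) :
    ∑ T : Finset (Fin m), (-1:ℝ)^T.card *
      (Polynomial.map (algebraMap ℚ ℝ) (Polynomial.bernoulli (2*p))).eval
        (|∑ i ∈ T, r i - ∑ i ∈ Tᶜ, r i| / (2*π))
    = (-(p:ℝ)/(2*π)^(2*p-1)) *
      ∑ T : Finset (Fin m), (-1:ℝ)^T.card * |∑ i ∈ T, r i - ∑ i ∈ Tᶜ, r i|^(2*p-1) := by
  have hstep : ∀ T : Finset (Fin m), (-1:ℝ)^T.card *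
      (Polynomial.map (algebraMap ℚ ℝ) (Polynomial.bernoulli (2*p))).eval
        (|∑ i ∈ T, r i - ∑ i ∈ Tᶜ, r i| / (2*π))
      = ∑ i ∈ Finset.range (2*p+1), ((bernoulli i : ℝ) * ((2*p).choose i : ℝ)) / (2*π)^(2*p-i)
          * ((-1:ℝ)^T.card * |∑ i ∈ T, r i - ∑ i ∈ Tᶜ, r i|^(2*p-i)) := by
    intro T
    rw [bern_eval, Finset.mul_sum]
    refine Finset.sum_congr rfl fun i _ => ?_
    rw [div_pow]
    ring
  rw [Finset.sum_congr rfl fun T _ => hstep T, Finset.sum_comm]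
  rw [Finset.sum_eq_single_of_mem 1 (Finset.mem_range.mpr (by omega)) ?_]
  · rw [← Finset.mul_sum]
    congr 1
    rw [bernoulli_one, Nat.choose_one_right]
    push_cast
    ring
  · intro i hi hne
    have hi' := Finset.mem_range.mp hi
    rw [← Finset.mul_sum]
    rcases Nat.even_or_odd i with hev | hodd
    · have heven : Even (2*p - i) := by
        rw [Nat.even_sub (by omega : i ≤ 2*p)]
        simp [hev, even_two_mul]
      have h0 : ∑ T : Finset (Fin m), (-1:ℝ)^T.card *
          |∑ i ∈ T, r i - ∑ i ∈ Tᶜ, r i|^(2*p-i) = 0 := by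
        rw [Finset.sum_congr rfl fun T _ => by rw [heven.pow_abs]]
        exact alt_vanish _ (by omega : 2*p - i < m) r
      rw [h0, mul_zero]
    · have hb : bernoulli i = 0 := by
        rw [bernoulli_eq_bernoulli'_of_ne_one hne]
        exact bernoulli'_eq_zero_of_odd hodd (by rcases hodd with ⟨k, hk⟩; omega)
      simp [hb]

theorem euclidean_volume_even (n : ℕ) (hn : 2 ≤ n) :
    ∃ ε > 0, ∀ r : Fin (2 * n) → ℝ, (∀ i, 0 < r i ∧ r i < ε) →
      (2 ^ (2 * n - 1) / π) *
        ∑' k : ℕ, (∏ i, Real.sin (((k : ℝ) + 1) * r i)) / ((k : ℝ) + 1) ^ (2 * n - 2) =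
      -(1 / (4 * (Nat.factorial (2 * n - 3) : ℝ))) *
        ∑ I : Finset (Fin (2 * n)), (-1 : ℝ) ^ I.card *
          |∑ i ∈ I, r i - ∑ i ∈ Iᶜ, r i| ^ (2 * n - 3) := by
  obtain ⟨q, rfl⟩ : ∃ q, n = q + 2 := ⟨n - 2, by omega⟩
  haveI : NeZero (2*(q+2)) := ⟨by omega⟩
  refine ⟨1 / (2*(q+2) : ℝ), by positivity, ?_⟩
  intro r hr
  have hπ := Real.pi_pos
  rw [show 2*(q+2) - 1 = 2*q+3 from by omega, show 2*(q+2) - 2 = 2*(q+1) from by omega,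
    show 2*(q+2) - 3 = 2*q+1 from by omega]
  have hrpos : ∀ i, 0 < r i := fun i => (hr i).1
  have htot : ∑ i, r i < 1 := by
    have h1 : ∑ i, r i < ∑ _i : Fin (2*(q+2)), (1/(2*(q+2):ℝ)) :=
      Finset.sum_lt_sum_of_nonempty Finset.univ_nonempty (fun i _ => (hr i).2)
    rw [Finset.sum_const, Finset.card_univ, Fintype.card_fin, nsmul_eq_mul] at h1
    have h2 : ((2*(q+2):ℕ):ℝ) * (1/(2*(q+2):ℝ)) = 1 := by
      push_cast
      field_simp
    rwa [h2] at h1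
  have habs : ∀ T : Finset (Fin (2*(q+2))),
      |∑ i ∈ T, r i - ∑ i ∈ Tᶜ, r i| ≤ ∑ i, r i := by
    intro T
    refine (abs_sub _ _).trans ?_
    rw [abs_of_nonneg (Finset.sum_nonneg fun i _ => (hrpos i).le),
      abs_of_nonneg (Finset.sum_nonneg fun i _ => (hrpos i).le),
      Finset.sum_add_sum_compl]
  have hx : ∀ T : Finset (Fin (2*(q+2))),
      |∑ i ∈ T, r i - ∑ i ∈ Tᶜ, r i| / (2*π) ∈ Set.Icc (0:ℝ) 1 := by
    intro T
    constructor
    · positivity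
    · rw [div_le_one (by positivity)]
      have h3 := (habs T).trans_lt htot
      nlinarith [Real.pi_gt_three]
  -- the shifted Fourier series for each subset
  have hshift : ∀ T : Finset (Fin (2*(q+2))),
      HasSum (fun N : ℕ => 1/((N:ℝ)+1)^(2*(q+1)) *
          Real.cos (((N:ℝ)+1) * (∑ i ∈ T, r i - ∑ i ∈ Tᶜ, r i)))
        ((-1:ℝ)^(q+1+1) * (2*π)^(2*(q+1))/2/(Nat.factorial (2*(q+1)) : ℝ) *
          (Polynomial.map (algebraMap ℚ ℝ) (Polynomial.bernoulli (2*(q+1)))).eval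
            (|∑ i ∈ T, r i - ∑ i ∈ Tᶜ, r i| / (2*π))) := by
    intro T
    have hcos := hasSum_one_div_nat_pow_mul_cos (k := q+1) (Nat.succ_ne_zero q) (hx T)
    have h1 := (hasSum_nat_add_iff' 1).mpr hcos
    simp only [Finset.range_one, Finset.sum_singleton, Nat.cast_zero] at h1
    rw [zero_pow (by omega : 2*(q+1) ≠ 0), div_zero, zero_mul, sub_zero] at h1
    have hfe : (fun N : ℕ => 1/((N:ℝ)+1)^(2*(q+1)) *
        Real.cos (((N:ℝ)+1) * (∑ i ∈ T, r i - ∑ i ∈ Tᶜ, r i)))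
        = (fun N : ℕ => 1/(((N+1 : ℕ)):ℝ)^(2*(q+1)) *
          Real.cos (2*π*(((N+1:ℕ)):ℝ)*(|∑ i ∈ T, r i - ∑ i ∈ Tᶜ, r i|/(2*π)))) := by
      funext N
      push_cast
      congr 1
      rw [show 2*π*((N:ℝ)+1)*(|∑ i ∈ T, r i - ∑ i ∈ Tᶜ, r i|/(2*π))
          = ((N:ℝ)+1)*|∑ i ∈ T, r i - ∑ i ∈ Tᶜ, r i| by field_simp]
      rw [show ((N:ℝ)+1)*|∑ i ∈ T, r i - ∑ i ∈ Tᶜ, r i|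
          = |((N:ℝ)+1)*(∑ i ∈ T, r i - ∑ i ∈ Tᶜ, r i)| by
        rw [abs_mul, abs_of_nonneg (by positivity : (0:ℝ) ≤ (N:ℝ)+1)]]
      rw [Real.cos_abs]
    rw [hfe]
    exact h1
  have hsumT := hasSum_sum (fun T (_ : T ∈ (univ : Finset (Finset (Fin (2*(q+2)))))) =>
    (hshift T).mul_left ((-1:ℝ)^T.card))
  have hmain := hsumT.mul_left ((-1:ℝ)^(q+2)/2^(2*(q+2)))
  have hfe2 : (fun N : ℕ => ((-1:ℝ)^(q+2)/2^(2*(q+2))) *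
      ∑ T : Finset (Fin (2*(q+2))), (-1:ℝ)^T.card * (1/((N:ℝ)+1)^(2*(q+1)) *
        Real.cos (((N:ℝ)+1) * (∑ i ∈ T, r i - ∑ i ∈ Tᶜ, r i))))
      = fun N : ℕ => (∏ i, Real.sin (((N:ℝ)+1) * r i)) / ((N:ℝ)+1)^(2*(q+1)) := by
    funext N
    rw [prod_sin_real (q+2) (fun i => ((N:ℝ)+1) * r i)]
    have hθ : ∀ T : Finset (Fin (2*(q+2))),
        ∑ i ∈ T, ((N:ℝ)+1) * r i - ∑ i ∈ Tᶜ, ((N:ℝ)+1) * r i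
        = ((N:ℝ)+1) * (∑ i ∈ T, r i - ∑ i ∈ Tᶜ, r i) := by
      intro T
      rw [← Finset.mul_sum, ← Finset.mul_sum]
      ring
    simp only [hθ]
    rw [mul_div_assoc, Finset.sum_div]
    exact congrArg _ (Finset.sum_congr rfl fun T _ => by ring)
  rw [hfe2] at hmain
  rw [hmain.tsum_eq]
  have hC : ∑ T : Finset (Fin (2*(q+2))), (-1:ℝ)^T.card *
      ((-1:ℝ)^(q+1+1) * (2*π)^(2*(q+1))/2/(Nat.factorial (2*(q+1)) : ℝ) *
        (Polynomial.map (algebraMap ℚ ℝ) (Polynomial.bernoulli (2*(q+1)))).eval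
          (|∑ i ∈ T, r i - ∑ i ∈ Tᶜ, r i| / (2*π)))
      = ((-1:ℝ)^(q+1+1) * (2*π)^(2*(q+1))/2/(Nat.factorial (2*(q+1)) : ℝ)) *
        ∑ T : Finset (Fin (2*(q+2))), (-1:ℝ)^T.card *
          (Polynomial.map (algebraMap ℚ ℝ) (Polynomial.bernoulli (2*(q+1)))).eval
            (|∑ i ∈ T, r i - ∑ i ∈ Tᶜ, r i| / (2*π)) := by
    rw [Finset.mul_sum]
    exact Finset.sum_congr rfl fun T _ => by ring
  rw [hC, key_bern (2*(q+2)) (q+1) (Nat.succ_ne_zero q) (by omega) r,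
    show 2*(q+1) - 1 = 2*q+1 from by omega]
  -- now pure scalar arithmetic
  have hfac : (Nat.factorial (2*(q+1)) : ℝ) = (2*(q:ℝ)+2) * (Nat.factorial (2*q+1) : ℝ) := by
    rw [show 2*(q+1) = (2*q+1)+1 from by omega, Nat.factorial_succ]
    push_cast
    ring
  have hs1 : ((-1:ℝ)^(q+2)) * ((-1:ℝ)^(q+1+1)) = 1 := by
    rw [show q+1+1 = q+2 from rfl, ← pow_add]
    exact Even.neg_one_pow ⟨q+2, by ring⟩
  have hpow1 : ((2:ℝ)*π)^(2*(q+1)) = (2*π)^(2*q+1) * (2*π) := by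
    rw [show 2*(q+1) = (2*q+1)+1 from by omega, pow_succ]
  have hpow2 : (2:ℝ)^(2*(q+2)) = 2^(2*q+3) * 2 := by
    rw [show 2*(q+2) = (2*q+3)+1 from by omega, pow_succ]
  have hfacpos : (0:ℝ) < (Nat.factorial (2*q+1) : ℝ) := by
    exact_mod_cast Nat.factorial_pos _
  rw [hpow1, hpow2, hfac]
  rcases Nat.even_or_odd q with hq | hq
  · rw [show ((-1:ℝ))^(q+2) = 1 from Even.neg_one_pow
      (by rcases hq with ⟨t, ht⟩; exact ⟨t+1, by omega⟩)]
    push_cast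
    field_simp
    ring
  · rw [show ((-1:ℝ))^(q+2) = -1 from Odd.neg_one_pow
      (by rcases hq with ⟨t, ht⟩; exact ⟨t+1, by omega⟩)]
    push_cast
    field_simp
    ring
end
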